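/- Suppose K is a henselian valued field of characteristic 0. Let α ∈ K, let f(x) = Σ_{i=0}^d a_i (x − α)^i be a polynomial over K, let β ∈ K, and let δ ∈ Γ with δ ≥ 0. Set m = max{ i ≤ d : ∀ j ≤ d, v(a_i(β − α)^i) ≤ v(a_j(β − α)^j) }. If f has a collision at β around α of severity strictly greater than 2^m·(v(m!) + δ), i.e., v(f(β)) > min_{j ≤ d} v(a_j(β − α)^j) + 2^m·(v(m!) + δ), then there exist λ ∈ K and n < m such that f^{(n)}(λ) = 0 and rv_δ(λ − α) = rv_δ(β − α). -/

import Mathlib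

open Polynomial

/-- `rv_δ(x) = rv_δ(y)`: either both are zero, or both are nonzero and
`v(x − y) > v(y) + δ`. -/
def RvEq {K : Type*} [Field K] {Γ : Type*} [AddCommGroup Γ] [LinearOrder Γ] [IsOrderedAddMonoid Γ]
    (v : K → WithTop Γ) (δ : WithTop Γ) (x y : K) : Prop :=
  (x = 0 ∧ y = 0) ∨ (x ≠ 0 ∧ y ≠ 0 ∧ v y + δ < v (x - y))

section Aux
variable {K : Type*} [Field K] {Γ : Type*} [AddCommGroup Γ] [LinearOrder Γ] [IsOrderedAddMonoid Γ]
variable {v : K → WithTop Γ}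
variable (hv0 : ∀ x : K, v x = ⊤ ↔ x = 0)
variable (hvmul : ∀ x y : K, v (x * y) = v x + v y)
variable (hvadd : ∀ x y : K, min (v x) (v y) ≤ v (x + y))

include hv0 hvmul in
lemma v_one : v 1 = 0 := by
  have h1 : v 1 = v 1 + v 1 := by
    conv_lhs => rw [show (1:K) = 1*1 by ring, hvmul]
  have hne : v 1 ≠ ⊤ := by simp [hv0]
  lift v 1 to Γ using hne with a ha
  rw [← WithTop.coe_add, WithTop.coe_eq_coe] at h1
  have : a = 0 := by
    have := left_eq_add.mp h1; exact this
  simp [this]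

include hv0 hvmul in
lemma v_neg (x : K) : v (-x) = v x := by
  have hm1 : v (-1 : K) = 0 := by
    have h1 : (0 : WithTop Γ) = v (-1 : K) + v (-1 : K) := by
      rw [← hvmul, neg_one_mul, neg_neg, v_one hv0 hvmul]
    have hne : v (-1 : K) ≠ ⊤ := by simp [hv0]
    lift v (-1 : K) to Γ using hne with a ha
    rw [← WithTop.coe_add, ← WithTop.coe_zero, WithTop.coe_eq_coe] at h1
    have : a = 0 := by
      have h2 : a + a = 0 := h1.symm
      rcases lt_trichotomy a 0 with h | h | h
      · exact absurd h2 (ne_of_lt (by simpa using add_lt_add h h))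
      · exact h
      · exact absurd h2 (ne_of_gt (by simpa using add_lt_add h h))
    simp [this]
  calc v (-x) = v ((-1) * x) := by ring_nf
  _ = v x := by rw [hvmul, hm1, zero_add]

include hv0 hvadd in
lemma le_v_sum {ι : Type*} (s : Finset ι) (g : ι → K) (b : WithTop Γ)
    (h : ∀ i ∈ s, b ≤ v (g i)) : b ≤ v (∑ i ∈ s, g i) := by
  classical
  induction s using Finset.cons_induction with
  | empty => simp [(hv0 0).2 rfl]
  | cons i s his ih =>
    rw [Finset.sum_cons]
    refine le_trans ?_ (hvadd _ _)
    exact le_min (h i (by simp)) (ih (fun j hj => h j (by simp [hj])))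

include hv0 hvadd in
lemma lt_v_sum {ι : Type*} (s : Finset ι) (g : ι → K) (b : WithTop Γ) (hb : b < ⊤)
    (h : ∀ i ∈ s, b < v (g i)) : b < v (∑ i ∈ s, g i) := by
  classical
  induction s using Finset.cons_induction with
  | empty => simpa [(hv0 0).2 rfl] using hb
  | cons i s his ih =>
    rw [Finset.sum_cons]
    refine lt_of_lt_of_le ?_ (hvadd _ _)
    exact lt_min (h i (by simp)) (ih (fun j hj => h j (by simp [hj])))

include hv0 hvmul hvadd in
lemma v_nat (n : ℕ) : 0 ≤ v (n : K) := by
  induction n with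
  | zero => simp [(hv0 0).2 rfl]
  | succ n ih =>
    push_cast
    refine le_trans ?_ (hvadd (n : K) 1)
    exact le_min ih (le_of_eq (v_one hv0 hvmul).symm)

include hv0 hvmul hvadd in
lemma v_add_left {x y : K} (h : v x < v y) : v (x + y) = v x := by
  have h1 : v x ≤ v (x + y) := by
    refine le_trans ?_ (hvadd x y); exact le_min le_rfl h.le
  have h2 : v (x + y) ≤ v x := by
    by_contra hc
    push_neg at hc
    have : min (v (x + y)) (v (-y)) ≤ v x := by
      have := hvadd (x + y) (-y); simpa using this
    rw [v_neg hv0 hvmul] at this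
    exact absurd this (not_le.2 (lt_min hc h))
  exact le_antisymm h2 h1

include hv0 hvmul in
lemma v_fact (m : ℕ) : v ((m.factorial : K)) = ∑ j ∈ Finset.range m, v ((j + 1 : ℕ) : K) := by
  induction m with
  | zero => simpa [Nat.factorial] using v_one hv0 hvmul
  | succ m ih =>
    rw [Finset.sum_range_succ, ← ih, Nat.factorial_succ]
    push_cast
    rw [hvmul]
    exact add_comm _ _

include hv0 hvmul in
lemma v_pow {x : K} {a : Γ} (hx : v x = (a : WithTop Γ)) (k : ℕ) :
    v (x ^ k) = ((k • a : Γ) : WithTop Γ) := by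
  induction k with
  | zero => simpa using v_one hv0 hvmul
  | succ k ih =>
    rw [pow_succ, hvmul, ih, hx, succ_nsmul, WithTop.coe_add]

include hv0 hvmul in
lemma v_div {x y : K} {a b : Γ} (hy0 : y ≠ 0) (hx : v x = (a : WithTop Γ))
    (hy : v y = (b : WithTop Γ)) : v (x / y) = ((a - b : Γ) : WithTop Γ) := by
  have key : v (x / y) + (b : WithTop Γ) = (a : WithTop Γ) := by
    rw [← hy, ← hvmul, div_mul_cancel₀ _ hy0, hx]
  have hne : v (x / y) ≠ ⊤ := by
    intro h; rw [h] at key; simp at key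
  lift v (x / y) to Γ using hne with c hc
  rw [← WithTop.coe_add, WithTop.coe_eq_coe] at key
  rw [WithTop.coe_eq_coe]
  rw [← key]; abel

lemma coe_le_of_le_add {X : WithTop Γ} {a b : Γ}
    (h : (a : WithTop Γ) ≤ X + (b : WithTop Γ)) : ((a - b : Γ) : WithTop Γ) ≤ X := by
  cases X with
  | top => exact le_top
  | coe x =>
    rw [← WithTop.coe_add, WithTop.coe_le_coe] at h
    rw [WithTop.coe_le_coe]
    exact sub_le_iff_le_add.mpr h

include hv0 hvmul in
lemma v_isUnit_iff (O : Subring K) (hO : ∀ x : K, x ∈ O ↔ 0 ≤ v x) (x : O) :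
    IsUnit x ↔ v (x : K) = 0 := by
  constructor
  · rintro ⟨u, rfl⟩
    have h1 : ((u : O) : K) * (((u⁻¹ : Oˣ) : O) : K) = 1 := by
      norm_cast
      simp [mul_inv_cancel]
    have h2 := hvmul ((u : O) : K) (((u⁻¹ : Oˣ) : O) : K)
    rw [h1, v_one hv0 hvmul] at h2
    have ha : 0 ≤ v ((u : O) : K) := (hO _).1 (u : O).2
    have hb : 0 ≤ v (((u⁻¹ : Oˣ) : O) : K) := (hO _).1 ((u⁻¹ : Oˣ) : O).2
    refine le_antisymm ?_ ha
    calc v ((u : O) : K) ≤ v ((u : O) : K) + v (((u⁻¹ : Oˣ) : O) : K) :=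
          le_add_of_nonneg_right hb
    _ = 0 := h2.symm
  · intro hx
    have hx0 : (x : K) ≠ 0 := by
      intro h; rw [h, (hv0 0).2 rfl] at hx; simp at hx
    have hinv : v ((x : K)⁻¹) = 0 := by
      have h2 := hvmul (x : K) (x : K)⁻¹
      rw [mul_inv_cancel₀ hx0, v_one hv0 hvmul, hx, zero_add] at h2
      exact h2.symm
    refine isUnit_iff_exists.mpr ⟨⟨(x : K)⁻¹, (hO _).2 hinv.ge⟩, ?_, ?_⟩
    · exact Subtype.ext (by simpa using mul_inv_cancel₀ hx0)
    · exact Subtype.ext (by simpa using inv_mul_cancel₀ hx0)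

include hv0 hvmul in
lemma v_mem_maximalIdeal_iff (O : Subring K) (hO : ∀ x : K, x ∈ O ↔ 0 ≤ v x)
    [IsLocalRing O] (x : O) :
    x ∈ IsLocalRing.maximalIdeal O ↔ 0 < v (x : K) := by
  rw [IsLocalRing.mem_maximalIdeal, mem_nonunits_iff, v_isUnit_iff hv0 hvmul O hO]
  have hge : 0 ≤ v (x : K) := (hO _).1 x.2
  constructor
  · intro h; exact lt_of_le_of_ne hge (Ne.symm h)
  · intro h; exact ne_of_gt h

end Aux

section Arith
variable {Γ : Type*} [AddCommGroup Γ] [LinearOrder Γ] [IsOrderedAddMonoid Γ]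

lemma gammaA {p q ν δ μ' : Γ} (hq : μ' ≤ q) (hν : 0 ≤ ν) (hδ : 0 ≤ δ)
    (hd : q + q + ν + ν + δ < p + μ') : ν + δ < p - q - ν := by
  have h1 : (q + ν + ν + δ) + q < p + q := by
    calc (q + ν + ν + δ) + q = q + q + ν + ν + δ := by abel
    _ < p + μ' := hd
    _ ≤ p + q := add_le_add_right hq p
  have h2 : q + ν + ν + δ < p := lt_of_add_lt_add_right h1
  rw [sub_sub, lt_sub_iff_add_lt]
  calc ν + δ + (q + ν) = q + ν + ν + δ := by abel
  _ < p := h2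

lemma gamma_key {p q ν δ μ' : Γ} (hq : μ' ≤ q) (hν : 0 ≤ ν) (hδ : 0 ≤ δ)
    (hd : q + q + ν + ν + δ < p + μ') {j : ℕ} (hj : 2 ≤ j) :
    p < μ' + j • (p - q - ν) := by
  have hA0 : 0 ≤ p - q - ν :=
    le_of_lt (lt_of_le_of_lt (add_nonneg hν hδ) (gammaA hq hν hδ hd))
  have h2 : p < μ' + ((p - q - ν) + (p - q - ν)) := by
    have hB : 0 < p + μ' - (q + q + ν + ν + δ) := sub_pos.mpr hd
    have hBδ : 0 < (p + μ' - (q + q + ν + ν + δ)) + δ := add_pos_of_pos_of_nonneg hB hδ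
    have heq : (p + μ' - (q + q + ν + ν + δ)) + δ
        = μ' + ((p - q - ν) + (p - q - ν)) - p := by abel
    rw [heq] at hBδ
    exact sub_pos.mp hBδ
  have h3 : (p - q - ν) + (p - q - ν) ≤ j • (p - q - ν) := by
    have h4 : (2 : ℕ) • (p - q - ν) ≤ j • (p - q - ν) := nsmul_le_nsmul_left hA0 hj
    simpa [two_nsmul] using h4
  exact lt_of_lt_of_le h2 (add_le_add_right h3 μ')

lemma geom_smul {M : Type*} [AddCommMonoid M] (a : M) (m : ℕ) :
    ∑ j ∈ Finset.range m, 2 ^ j • a = (2 ^ m - 1) • a := by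
  induction m with
  | zero => simp
  | succ m ih =>
    rw [Finset.sum_range_succ, ih, ← add_nsmul]
    congr 1
    have h2 : (2:ℕ) ^ (m+1) = 2 ^ m + 2 ^ m := by rw [pow_succ]; ring
    have h1 : 1 ≤ (2:ℕ) ^ m := Nat.one_le_two_pow
    omega

lemma nsmul_coe (k : ℕ) (x : Γ) :
    (k • ((x : WithTop Γ))) = ((k • x : Γ) : WithTop Γ) := by
  induction k with
  | zero => simp
  | succ k ih => rw [succ_nsmul, succ_nsmul, ih, WithTop.coe_add]

lemma no_drop (w g : ℕ → WithTop Γ) (δ' μ : WithTop Γ) (m : ℕ)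
    (h : ∀ n, 1 ≤ n → n ≤ m → w (n-1) + μ ≤ w n + w n + g n + g n + δ') :
    ∀ k, k ≤ m → w 0 + (2 ^ k - 1) • μ ≤
      2 ^ k • w k + ∑ j ∈ Finset.range k, (2 ^ (j+1) • g (j+1) + 2 ^ j • δ') := by
  intro k
  induction k with
  | zero => simp
  | succ k ih =>
    intro hk1
    have ih' := ih (by omega)
    have hn := h (k+1) (by omega) hk1
    have hdouble : ∀ x : WithTop Γ, 2 ^ k • x + 2 ^ k • x = 2 ^ (k+1) • x := by
      intro x; rw [← add_nsmul]; congr 1; rw [pow_succ]; ring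
    have hsm : 2 ^ k • (w k + μ) ≤
        2 ^ k • (w (k+1) + w (k+1) + g (k+1) + g (k+1) + δ') := nsmul_le_nsmul_right hn _
    have hnat : (2:ℕ) ^ (k+1) - 1 = (2 ^ k - 1) + 2 ^ k := by
      have h2 : (2:ℕ) ^ (k+1) = 2 ^ k + 2 ^ k := by rw [pow_succ]; ring
      have h1 : 1 ≤ (2:ℕ) ^ k := Nat.one_le_two_pow
      omega
    calc w 0 + (2 ^ (k+1) - 1) • μ = (w 0 + (2 ^ k - 1) • μ) + 2 ^ k • μ := by
          rw [hnat, add_nsmul, ← add_assoc]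
    _ ≤ (2 ^ k • w k + ∑ j ∈ Finset.range k, (2 ^ (j+1) • g (j+1) + 2 ^ j • δ')) + 2 ^ k • μ :=
          add_le_add_left ih' _
    _ = 2 ^ k • (w k + μ) + ∑ j ∈ Finset.range k, (2 ^ (j+1) • g (j+1) + 2 ^ j • δ') := by
          rw [nsmul_add]; abel
    _ ≤ 2 ^ k • (w (k+1) + w (k+1) + g (k+1) + g (k+1) + δ')
          + ∑ j ∈ Finset.range k, (2 ^ (j+1) • g (j+1) + 2 ^ j • δ') :=
          add_le_add_left hsm _
    _ = 2 ^ (k+1) • w (k+1) +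
          ∑ j ∈ Finset.range (k+1), (2 ^ (j+1) • g (j+1) + 2 ^ j • δ') := by
          rw [Finset.sum_range_succ, nsmul_add, nsmul_add, nsmul_add, nsmul_add]
          rw [← hdouble (w (k+1)), ← hdouble (g (k+1))]
          abel

end Arith

lemma coe_O_sum {K : Type*} [Field K] (O : Subring K) {ι : Type*} (s : Finset ι) (g : ι → O) :
    ((∑ i ∈ s, g i : O) : K) = ∑ i ∈ s, ((g i : O) : K) := by
  exact map_sum O.subtype g s

/-- Let `K` be henselian of characteristic `0`,
`f(x) = Σ_{i=0}^d a_i (x − α)^i`, `δ ≥ 0`, and let `m` be the largest `i ≤ d`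
such that `v(a_i(β − α)^i) ≤ v(a_j(β − α)^j)` for all `j ≤ d`.  If `f` has a
collision at `β` around `α` of severity `> 2^m·(v(m!) + δ)`, then there are
`λ ∈ K` and `n < m` with `f^{(n)}(λ) = 0` and `rv_δ(λ − α) = rv_δ(β − α)`. -/
theorem stmt_9 {K : Type*} [Field K] [CharZero K]
    {Γ : Type*} [AddCommGroup Γ] [LinearOrder Γ] [IsOrderedAddMonoid Γ]
    (v : K → WithTop Γ) (hsurj : Function.Surjective v)
    (hv0 : ∀ x : K, v x = ⊤ ↔ x = 0)
    (hvmul : ∀ x y : K, v (x * y) = v x + v y)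
    (hvadd : ∀ x y : K, min (v x) (v y) ≤ v (x + y))
    (O : Subring K) (hO : ∀ x : K, x ∈ O ↔ 0 ≤ v x) [HenselianLocalRing O]
    (α β : K) (d : ℕ) (a : ℕ → K) (f : K[X])
    (hf : f = ∑ i ∈ Finset.range (d + 1), C (a i) * (X - C α) ^ i)
    (δ : Γ) (hδ : 0 ≤ δ)
    (m : ℕ) (hmd : m ≤ d)
    (hmmin : ∀ j ≤ d, v (a m * (β - α) ^ m) ≤ v (a j * (β - α) ^ j))
    (hmmax : ∀ i ≤ d, (∀ j ≤ d, v (a i * (β - α) ^ i) ≤ v (a j * (β - α) ^ j)) → i ≤ m)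
    (hcol : v (a m * (β - α) ^ m) + 2 ^ m • (v ((m.factorial : K)) + (δ : WithTop Γ))
      < v (f.eval β)) :
    ∃ (lam : K) (n : ℕ), n < m ∧ (derivative^[n] f).eval lam = 0 ∧
      RvEq v (δ : WithTop Γ) (lam - α) (β - α) := by
  classical
  set t := β - α with htdef
  -- μ is finite
  have hμtop : v (a m * t ^ m) ≠ ⊤ := by
    intro h; rw [h, top_add] at hcol; exact not_top_lt hcol
  obtain ⟨μ', hμ'⟩ := WithTop.ne_top_iff_exists.mp hμtop
  have hfd : f.natDegree ≤ d := by
    rw [hf]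
    refine Polynomial.natDegree_sum_le_of_forall_le _ _ fun i hi => ?_
    have h1 : (C (a i) * (X - C α) ^ i).natDegree ≤ i := by
      calc (C (a i) * (X - C α) ^ i).natDegree
          ≤ (C (a i)).natDegree + ((X - C α) ^ i).natDegree := Polynomial.natDegree_mul_le
      _ ≤ 0 + i * 1 := by
          refine add_le_add (le_of_eq (Polynomial.natDegree_C _)) ?_
          exact le_trans (Polynomial.natDegree_pow_le)
            (Nat.mul_le_mul_left i (Polynomial.natDegree_X_sub_C_le α))
      _ = i := by omega
    exact le_trans h1 (by simpa [Nat.lt_succ_iff] using hi)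
  set c : ℕ → K := fun i => (Polynomial.hasseDeriv i f).eval β with hc
  have key1 : ∀ i, c i * t ^ i
      = ∑ j ∈ Finset.range (d+1), a j * t ^ j * ((j.choose i : K)) := by
    intro i
    have h1 : Polynomial.taylor β f = ∑ j ∈ Finset.range (d+1), C (a j) * (X + C t) ^ j := by
      rw [hf, map_sum]
      refine Finset.sum_congr rfl fun j _ => ?_
      rw [Polynomial.taylor_apply, Polynomial.mul_comp, Polynomial.pow_comp, Polynomial.sub_comp,
        Polynomial.X_comp, Polynomial.C_comp, Polynomial.C_comp]
      congr 2
      rw [htdef, Polynomial.C_sub]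
      ring
    have h2 : c i = ∑ j ∈ Finset.range (d+1), a j * (t ^ (j - i) * ((j.choose i : K))) := by
      have h3 : c i = (Polynomial.taylor β f).coeff i := (Polynomial.taylor_coeff β f i).symm
      rw [h3, h1, Polynomial.finset_sum_coeff]
      refine Finset.sum_congr rfl fun j _ => ?_
      rw [Polynomial.coeff_C_mul, Polynomial.coeff_X_add_C_pow]
    rw [h2, Finset.sum_mul]
    refine Finset.sum_congr rfl fun j hj => ?_
    rcases le_or_gt i j with hij | hij
    · calc a j * (t ^ (j-i) * ((j.choose i : K))) * t ^ i
          = a j * (t^(j-i) * t^i) * ((j.choose i : K)) := by ring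
      _ = a j * t ^ j * ((j.choose i : K)) := by rw [← pow_add, Nat.sub_add_cancel hij]
    · rw [Nat.choose_eq_zero_of_lt hij]
      push_cast
      ring
  have wlow : ∀ i, (μ' : WithTop Γ) ≤ v (c i * t ^ i) := by
    intro i
    rw [key1 i]
    refine le_v_sum hv0 hvadd _ _ _ fun j hj => ?_
    have hj' : j ≤ d := by simpa [Nat.lt_succ_iff] using hj
    rw [hvmul]
    calc (μ' : WithTop Γ) = v (a m * t ^ m) := hμ'
    _ ≤ v (a j * t ^ j) := hmmin j hj'
    _ ≤ v (a j * t ^ j) + v ((j.choose i : K)) :=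
        le_add_of_nonneg_right (v_nat hv0 hvmul hvadd _)
  have hgt : ∀ j ≤ d, m < j → v (a m * t ^ m) < v (a j * t ^ j) := by
    intro j hjd hmj
    by_contra hcon
    push_neg at hcon
    have := hmmax j hjd (fun j' hj' => le_trans hcon (hmmin j' hj'))
    omega
  have wm : v (c m * t ^ m) = v (a m * t ^ m) := by
    rw [key1 m]
    have hmem : m ∈ Finset.range (d+1) := Finset.mem_range.mpr (by omega)
    rw [← Finset.sum_erase_add _ _ hmem]
    have hlast : a m * t ^ m * ((m.choose m : K)) = a m * t ^ m := by
      rw [Nat.choose_self]; push_cast; ring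
    rw [hlast, add_comm]
    refine v_add_left hv0 hvmul hvadd ?_
    refine lt_v_sum hv0 hvadd _ _ _ (lt_top_iff_ne_top.mpr hμtop) fun j hj => ?_
    obtain ⟨hjne, hjmem⟩ := Finset.mem_erase.mp hj
    have hjd : j ≤ d := by simpa [Nat.lt_succ_iff] using hjmem
    rcases lt_or_gt_of_ne hjne with hlt | hgt'
    · rw [Nat.choose_eq_zero_of_lt hlt, Nat.cast_zero, mul_zero, (hv0 0).2 rfl]
      exact lt_top_iff_ne_top.mpr hμtop
    · calc v (a m * t ^ m) < v (a j * t ^ j) := hgt j hjd hgt'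
      _ ≤ v (a j * t ^ j) + v ((j.choose m : K)) :=
          le_add_of_nonneg_right (v_nat hv0 hvmul hvadd _)
      _ = v (a j * t ^ j * ((j.choose m : K))) := (hvmul _ _).symm
  have hc0 : c 0 = f.eval β := by
    simp [hc]
  have hm1 : 1 ≤ m := by
    by_contra hcon
    have hm0 : m = 0 := by omega
    subst hm0
    rw [hc0] at wm
    simp only [pow_zero, one_smul, Nat.factorial_zero, Nat.cast_one, v_one hv0 hvmul,
      zero_add, mul_one] at hcol wm
    rw [← wm] at hcol
    have hle : v (f.eval β) ≤ v (f.eval β) + (δ : WithTop Γ) := by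
      refine le_add_of_nonneg_right ?_
      exact_mod_cast hδ
    exact absurd hcol (not_lt.mpr hle)
  have ht0 : t ≠ 0 := by
    intro h
    rw [h, zero_pow (by omega : m ≠ 0), mul_zero] at hμtop
    exact hμtop ((hv0 0).2 rfl)
  have hτtop : v t ≠ ⊤ := fun h => ht0 ((hv0 t).1 h)
  obtain ⟨τ, hτ⟩ := WithTop.ne_top_iff_exists.mp hτtop
  by_cases hroot : ∃ j, j < m ∧ c j = 0
  · obtain ⟨j, hjm, hcj⟩ := hroot
    refine ⟨β, j, hjm, ?_, ?_⟩
    · have hD : (derivative^[j] f) = j.factorial • (Polynomial.hasseDeriv j f) := by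
        rw [← Polynomial.factorial_smul_hasseDeriv]
        rfl
      have hcj' : (Polynomial.hasseDeriv j f).eval β = 0 := hcj
      rw [hD, nsmul_eq_mul, Polynomial.eval_mul, Polynomial.eval_natCast, hcj', mul_zero]
    · refine Or.inr ⟨ht0, ht0, ?_⟩
      rw [sub_self, (hv0 0).2 rfl, ← hτ, ← WithTop.coe_add]
      exact WithTop.coe_lt_top _
  push_neg at hroot
  by_cases hdrop : ∃ n, 1 ≤ n ∧ n ≤ m ∧
      v (c n * t ^ n) + v (c n * t ^ n) + v ((n : K)) + v ((n : K)) + (δ : WithTop Γ)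
        < v (c (n-1) * t ^ (n-1)) + v (a m * t ^ m)
  swap
  · -- no drop: contradiction with hcol
    exfalso
    push_neg at hdrop
    have hnd := no_drop (fun i => v (c i * t ^ i)) (fun i => v ((i : K))) (δ : WithTop Γ)
      (v (a m * t ^ m)) m (fun n h1 h2 => hdrop n h1 h2) m le_rfl
    rw [pow_zero, mul_one, hc0, wm] at hnd
    set M := v (a m * t ^ m) with hM
    set vf := v ((m.factorial : K)) with hvf
    have h2m : (2:ℕ)^m • M = M + (2^m - 1) • M := by
      conv_lhs => rw [show (2:ℕ)^m = 1 + (2^m - 1) by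
        have := Nat.one_le_two_pow (n := m); omega]
      rw [add_nsmul, one_nsmul]
    have hsplit : ∑ j ∈ Finset.range m,
        (2 ^ (j+1) • v (((j+1 : ℕ) : K)) + 2 ^ j • (δ : WithTop Γ))
        = (∑ j ∈ Finset.range m, 2 ^ (j+1) • v (((j+1 : ℕ) : K)))
          + (∑ j ∈ Finset.range m, 2 ^ j • (δ : WithTop Γ)) := Finset.sum_add_distrib
    have hbound1 : ∑ j ∈ Finset.range m, 2 ^ (j+1) • v (((j+1:ℕ) : K)) ≤ 2 ^ m • vf := by
      rw [hvf, v_fact hv0 hvmul, Finset.smul_sum]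
      refine Finset.sum_le_sum fun j hj => ?_
      refine nsmul_le_nsmul_left (v_nat hv0 hvmul hvadd _) ?_
      exact Nat.pow_le_pow_right (by norm_num) (by have := Finset.mem_range.mp hj; omega)
    have hδ1 : ((2:ℕ) ^ m - 1) • (δ : WithTop Γ) ≤ 2 ^ m • (δ : WithTop Γ) := by
      refine nsmul_le_nsmul_left ?_ (Nat.sub_le _ _)
      exact_mod_cast hδ
    have hfinal : v (f.eval β) + (2^m - 1) • M
        ≤ (M + 2^m • (vf + (δ : WithTop Γ))) + (2^m - 1) • M := by
      calc v (f.eval β) + (2^m - 1) • M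
          ≤ 2^m • M + ∑ j ∈ Finset.range m,
            (2 ^ (j+1) • v (((j+1 : ℕ) : K)) + 2 ^ j • (δ : WithTop Γ)) := hnd
      _ = (M + ∑ j ∈ Finset.range m,
            (2 ^ (j+1) • v (((j+1 : ℕ) : K)) + 2 ^ j • (δ : WithTop Γ))) + (2^m - 1) • M := by
          rw [h2m]; abel
      _ ≤ (M + 2^m • (vf + (δ : WithTop Γ))) + (2^m - 1) • M := by
          refine add_le_add_left (add_le_add_right ?_ M) _
          calc ∑ j ∈ Finset.range m,
              (2 ^ (j+1) • v (((j+1 : ℕ) : K)) + 2 ^ j • (δ : WithTop Γ))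
              = (∑ j ∈ Finset.range m, 2 ^ (j+1) • v (((j+1 : ℕ) : K)))
                + (∑ j ∈ Finset.range m, 2 ^ j • (δ : WithTop Γ)) := hsplit
          _ ≤ 2 ^ m • vf + (2 ^ m - 1) • (δ : WithTop Γ) := by
              rw [geom_smul]
              exact add_le_add_left hbound1 _
          _ ≤ 2 ^ m • vf + 2 ^ m • (δ : WithTop Γ) := add_le_add_right hδ1 _
          _ = 2 ^ m • (vf + (δ : WithTop Γ)) := (nsmul_add _ _ _).symm
    have hMne : ((2:ℕ)^m - 1) • M ≠ ⊤ := by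
      rw [← hμ', nsmul_coe]
      exact WithTop.coe_ne_top
    have hcancel : v (f.eval β) ≤ M + 2^m • (vf + (δ : WithTop Γ)) :=
      (WithTop.add_le_add_iff_right hMne).mp hfinal
    exact absurd hcol (not_lt.mpr hcancel)
  obtain ⟨n, h1n, hnm, hdr⟩ := hdrop
  have hcn1 : c (n-1) ≠ 0 := hroot (n-1) (by omega)
  have hcn : c n ≠ 0 := by
    intro h
    rw [h, zero_mul, (hv0 0).2 rfl, top_add, top_add, top_add, top_add] at hdr
    exact not_top_lt hdr
  have hp0 : c (n-1) * t ^ (n-1) ≠ 0 := mul_ne_zero hcn1 (pow_ne_zero _ ht0)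
  have hq0 : c n * t ^ n ≠ 0 := mul_ne_zero hcn (pow_ne_zero _ ht0)
  obtain ⟨p, hp⟩ := WithTop.ne_top_iff_exists.mp (fun h => hp0 ((hv0 _).1 h))
  obtain ⟨q, hq⟩ := WithTop.ne_top_iff_exists.mp (fun h => hq0 ((hv0 _).1 h))
  have hn0K : ((n : K)) ≠ 0 := Nat.cast_ne_zero.mpr (by omega)
  obtain ⟨ν, hν⟩ := WithTop.ne_top_iff_exists.mp (fun h => hn0K ((hv0 _).1 h))
  have hdropΓ : q + q + ν + ν + δ < p + μ' := by
    rw [← hp, ← hq, ← hν, ← hμ'] at hdr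
    exact_mod_cast hdr
  have hq' : μ' ≤ q := by
    have := wlow n; rw [← hq] at this; exact_mod_cast this
  have hν' : (0 : Γ) ≤ ν := by
    have := v_nat hv0 hvmul hvadd (v := v) n; rw [← hν] at this; exact_mod_cast this
  have vc1 : v (c (n-1)) = ((p - (n-1) • τ : Γ) : WithTop Γ) := by
    obtain ⟨γ, hγ⟩ := WithTop.ne_top_iff_exists.mp (fun h => hcn1 ((hv0 _).1 h))
    have h1 : v (c (n-1)) + v (t ^ (n-1)) = (p : WithTop Γ) := by rw [← hvmul, hp]
    rw [← hγ, v_pow hv0 hvmul hτ.symm, ← WithTop.coe_add, WithTop.coe_eq_coe] at h1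
    rw [← hγ, WithTop.coe_eq_coe]
    exact eq_sub_of_add_eq h1
  have vcn : v (c n) = ((q - n • τ : Γ) : WithTop Γ) := by
    obtain ⟨γ, hγ⟩ := WithTop.ne_top_iff_exists.mp (fun h => hcn ((hv0 _).1 h))
    have h1 : v (c n) + v (t ^ n) = (q : WithTop Γ) := by rw [← hvmul, hq]
    rw [← hγ, v_pow hv0 hvmul hτ.symm, ← WithTop.coe_add, WithTop.coe_eq_coe] at h1
    rw [← hγ, WithTop.coe_eq_coe]
    exact eq_sub_of_add_eq h1
  set s : K := -(c (n-1) / ((n : K) * c n)) with hs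
  have hs0 : s ≠ 0 := neg_ne_zero.mpr (div_ne_zero hcn1 (mul_ne_zero hn0K hcn))
  have hvncn : v ((n : K) * c n) = ((ν + (q - n • τ) : Γ) : WithTop Γ) := by
    rw [hvmul, ← hν, vcn, ← WithTop.coe_add]
  have vs' : v s = (((p - q - ν) + τ : Γ) : WithTop Γ) := by
    rw [hs, v_neg hv0 hvmul, v_div hv0 hvmul (mul_ne_zero hn0K hcn) vc1 hvncn]
    congr 1
    have hn' : n • τ = (n-1) • τ + τ := by
      conv_lhs => rw [show n = (n-1)+1 by omega]
      rw [succ_nsmul]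
    rw [hn']; abel
  set bb : ℕ → K := fun j => ((j + (n-1)).choose j : K) * c (j + (n-1)) with hbb
  set e : ℕ → K := fun j => bb j * s ^ j / c (n-1) with he
  have he0 : e 0 = 1 := by
    simp [he, hbb, div_self hcn1]
  have he1 : e 1 = -1 := by
    have h2 : 1 + (n-1) = n := by omega
    have h3 : bb 1 = (n : K) * c n := by
      simp only [hbb, h2, Nat.choose_one_right]
    simp only [he, h3, pow_one, hs]
    field_simp
  have hejv : ∀ j, 2 ≤ j → 0 < v (e j) := by
    intro j hj
    by_cases hz : bb j * s ^ j = 0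
    · have hez : e j = 0 := by simp only [he]; rw [hz, zero_div]
      rw [hez, (hv0 0).2 rfl]
      exact lt_top_iff_ne_top.mpr (by simp)
    · have hbs : ((μ' - (j + (n-1)) • τ + j • ((p - q - ν) + τ) : Γ) : WithTop Γ)
          ≤ v (bb j * s ^ j) := by
        rw [hvmul, WithTop.coe_add]
        refine add_le_add ?_ ?_
        · show ((μ' - (j + (n-1)) • τ : Γ) : WithTop Γ) ≤ v (bb j)
          simp only [hbb]
          rw [hvmul]
          refine le_trans ?_ (le_add_of_nonneg_left (v_nat hv0 hvmul hvadd _))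
          refine coe_le_of_le_add ?_
          calc ((μ' : Γ) : WithTop Γ) ≤ v (c (j+(n-1)) * t ^ (j+(n-1))) := wlow _
          _ = v (c (j+(n-1))) + (((j+(n-1)) • τ : Γ) : WithTop Γ) := by
              rw [hvmul, v_pow hv0 hvmul hτ.symm]
        · rw [v_pow hv0 hvmul vs' j]
      have hkey : v (c (n-1)) < v (bb j * s ^ j) := by
        refine lt_of_lt_of_le ?_ hbs
        rw [vc1, WithTop.coe_lt_coe]
        have hg := gamma_key hq' hν' hδ hdropΓ hj
        have heq : μ' - (j + (n-1)) • τ + j • ((p - q - ν) + τ)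
            = (μ' + j • (p - q - ν)) - (n-1) • τ := by
          rw [nsmul_add, add_nsmul]; abel
        rw [heq]
        exact sub_lt_sub_right hg _
      have hmul : v (bb j * s ^ j) = v (e j) + v (c (n-1)) := by
        have h6 : e j * c (n-1) = bb j * s ^ j := by
          simp only [he]; rw [div_mul_cancel₀ _ hcn1]
        rw [← h6, hvmul]
      rw [hmul, vc1] at hkey
      by_contra hneg
      push_neg at hneg
      have h7 : v (e j) + ((p - (n-1) • τ : Γ) : WithTop Γ)
          ≤ 0 + ((p - (n-1) • τ : Γ) : WithTop Γ) := add_le_add_left hneg _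
      rw [zero_add] at h7
      exact absurd hkey (not_lt.mpr h7)
  have hejnn : ∀ j, 0 ≤ v (e j) := by
    intro j
    match j with
    | 0 => rw [he0, v_one hv0 hvmul]
    | 1 => rw [he1, v_neg hv0 hvmul, v_one hv0 hvmul]
    | (j+2) => exact (hejv (j+2) (by omega)).le
  have hd1 : 1 ≤ d := le_trans hm1 hmd
  set eO : ℕ → O := fun j => ⟨e j, (hO _).mpr (hejnn j)⟩ with heO
  set Q : Polynomial O :=
    Polynomial.X ^ d + ∑ j ∈ Finset.Icc 1 d, Polynomial.C (eO j) * Polynomial.X ^ (d - j)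
    with hQ
  have hQm : Q.Monic := by
    apply Polynomial.monic_X_pow_add
    refine lt_of_le_of_lt (Polynomial.degree_sum_le _ _) ?_
    rw [Finset.sup_lt_iff (by exact_mod_cast WithBot.bot_lt_coe d)]
    intro j hj
    refine lt_of_le_of_lt (Polynomial.degree_C_mul_X_pow_le _ _) ?_
    exact_mod_cast (show d - j < d by have := Finset.mem_Icc.mp hj; omega)
  have hIcc1 : ∀ g : ℕ → K, ∑ j ∈ Finset.Icc 1 d, g j = g 1 + ∑ j ∈ Finset.Icc 2 d, g j := by
    intro g
    rw [← Finset.sum_insert (by simp : (1:ℕ) ∉ Finset.Icc 2 d)]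
    congr 1
    ext x; simp [Finset.mem_Icc, Finset.mem_insert]; omega
  have hQe1 : Q.eval 1 ∈ IsLocalRing.maximalIdeal O := by
    rw [v_mem_maximalIdeal_iff hv0 hvmul O hO]
    have h1 : Q.eval 1 = 1 + ∑ j ∈ Finset.Icc 1 d, eO j := by
      rw [hQ, Polynomial.eval_add, Polynomial.eval_pow, Polynomial.eval_X, one_pow,
        Polynomial.eval_finset_sum]
      congr 1
      refine Finset.sum_congr rfl fun j hj => ?_
      rw [Polynomial.eval_mul, Polynomial.eval_C, Polynomial.eval_pow, Polynomial.eval_X,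
        one_pow, mul_one]
    have h2 : ((Q.eval 1 : O) : K) = 1 + ∑ j ∈ Finset.Icc 1 d, e j := by
      rw [h1]
      push_cast [coe_O_sum]
      rfl
    rw [h2]
    have h3 : (1 : K) + ∑ j ∈ Finset.Icc 1 d, e j = ∑ j ∈ Finset.Icc 2 d, e j := by
      rw [hIcc1 e, he1]; ring
    rw [h3]
    exact lt_v_sum hv0 hvadd _ _ _ (lt_top_iff_ne_top.mpr (by simp))
      (fun j hj => hejv j (Finset.mem_Icc.mp hj).1)
  have hQdu : IsUnit (Q.derivative.eval 1) := by
    rw [v_isUnit_iff hv0 hvmul O hO]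
    have hder : Q.derivative = Polynomial.C ((d : O)) * Polynomial.X ^ (d-1)
        + ∑ j ∈ Finset.Icc 1 d,
          Polynomial.C (eO j) * (Polynomial.C (((d-j : ℕ) : O)) * Polynomial.X ^ (d - j - 1)) := by
      rw [hQ, Polynomial.derivative_add, Polynomial.derivative_X_pow, map_sum]
      congr 1
      refine Finset.sum_congr rfl fun j hj => ?_
      rw [Polynomial.derivative_C_mul, Polynomial.derivative_X_pow]
    have h1 : Q.derivative.eval 1 = (d : O) + ∑ j ∈ Finset.Icc 1 d, eO j * ((d - j : ℕ) : O) := by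
      rw [hder, Polynomial.eval_add, Polynomial.eval_mul, Polynomial.eval_C,
        Polynomial.eval_pow, Polynomial.eval_X, one_pow, mul_one, Polynomial.eval_finset_sum]
      congr 1
      refine Finset.sum_congr rfl fun j hj => ?_
      rw [Polynomial.eval_mul, Polynomial.eval_C, Polynomial.eval_mul, Polynomial.eval_C,
        Polynomial.eval_pow, Polynomial.eval_X, one_pow, mul_one]
    have h2 : ((Q.derivative.eval 1 : O) : K)
        = (d : K) + ∑ j ∈ Finset.Icc 1 d, e j * ((d - j : ℕ) : K) := by
      rw [h1]
      push_cast [coe_O_sum]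
      rfl
    rw [h2]
    have h3 : (d : K) + ∑ j ∈ Finset.Icc 1 d, e j * ((d - j : ℕ) : K)
        = 1 + ∑ j ∈ Finset.Icc 2 d, e j * ((d - j : ℕ) : K) := by
      rw [hIcc1 (fun j => e j * ((d - j : ℕ) : K)), he1]
      have h4 : ((d - 1 : ℕ) : K) = (d : K) - 1 := by
        push_cast [Nat.cast_sub hd1]; ring
      rw [h4]
      ring
    rw [h3]
    refine v_add_left hv0 hvmul hvadd ?_ |>.trans (v_one hv0 hvmul)
    rw [v_one hv0 hvmul]
    refine lt_v_sum hv0 hvadd _ _ _ (lt_top_iff_ne_top.mpr (by simp)) fun j hj => ?_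
    rw [hvmul]
    exact lt_of_lt_of_le (lt_of_lt_of_le (hejv j (Finset.mem_Icc.mp hj).1)
      (le_add_of_nonneg_right (v_nat hv0 hvmul hvadd _))) le_rfl
  obtain ⟨y, hyr, hy1⟩ := HenselianLocalRing.is_henselian Q hQm 1 hQe1 hQdu
  have hvy1 : 0 < v ((y : K) - 1) := by
    have h1 := (v_mem_maximalIdeal_iff hv0 hvmul O hO _).mp hy1
    have h2 : ((y - 1 : O) : K) = (y : K) - 1 := by push_cast; ring
    rwa [h2] at h1
  have hvy : v ((y : K)) = 0 := by
    have h1 : ((y : K)) = 1 + ((y : K) - 1) := by ring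
    rw [h1, v_add_left hv0 hvmul hvadd (by rw [v_one hv0 hvmul]; exact hvy1),
      v_one hv0 hvmul]
  have hy0 : (y : K) ≠ 0 := by
    intro h
    rw [h, (hv0 0).2 rfl] at hvy
    simp at hvy
  have hKroot : ((y:K))^d + ∑ j ∈ Finset.Icc 1 d, e j * ((y:K))^(d-j) = 0 := by
    have h0 : Q.eval y = 0 := hyr
    have h2 : Q.eval y = y ^ d + ∑ j ∈ Finset.Icc 1 d, eO j * y ^ (d - j) := by
      rw [hQ, Polynomial.eval_add, Polynomial.eval_pow, Polynomial.eval_X,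
        Polynomial.eval_finset_sum]
      congr 1
      refine Finset.sum_congr rfl fun j hj => ?_
      rw [Polynomial.eval_mul, Polynomial.eval_C, Polynomial.eval_pow, Polynomial.eval_X]
    rw [h2] at h0
    have h1 : ((y ^ d + ∑ j ∈ Finset.Icc 1 d, eO j * y ^ (d - j) : O) : K) = 0 := by
      rw [h0]; rfl
    push_cast [coe_O_sum] at h1
    exact h1
  set u : K := ((y : K))⁻¹ with hu
  have hu0 : u ≠ 0 := inv_ne_zero hy0
  have hvu : v u = 0 := by
    have h1 := hvmul ((y : K)) u
    rw [hu, mul_inv_cancel₀ hy0, v_one hv0 hvmul, hvy, zero_add] at h1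
    exact h1.symm
  set lam : K := β + s * u with hlam
  have hTay : (Polynomial.hasseDeriv (n-1) f).eval lam
      = ∑ j ∈ Finset.range (d+1), bb j * (s*u)^j := by
    have hFdeg : (Polynomial.taylor β (Polynomial.hasseDeriv (n-1) f)).natDegree < d + 1 := by
      rw [Polynomial.natDegree_taylor]
      have h5 := Polynomial.natDegree_hasseDeriv_le f (n-1)
      omega
    have h1 : lam = (s*u) + β := by rw [hlam]; ring
    rw [h1, ← Polynomial.taylor_eval β (Polynomial.hasseDeriv (n-1) f) (s*u),
      Polynomial.eval_eq_sum_range' hFdeg]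
    refine Finset.sum_congr rfl fun j hj => ?_
    congr 1
    rw [Polynomial.taylor_coeff]
    have h2 := Polynomial.hasseDeriv_comp (R := K) j (n-1)
    have h3 := LinearMap.congr_fun h2 f
    rw [LinearMap.comp_apply] at h3
    rw [h3, LinearMap.smul_apply, nsmul_eq_mul, Polynomial.eval_mul, Polynomial.eval_natCast]
  have hsum0 : ∑ j ∈ Finset.range (d+1), e j * ((y:K))^(d-j) = 0 := by
    have hr : Finset.range (d+1) = insert 0 (Finset.Icc 1 d) := by
      ext x; simp [Nat.lt_succ_iff]; omega
    rw [hr, Finset.sum_insert (by simp), he0, one_mul, Nat.sub_zero]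
    exact hKroot
  have hlamroot : (Polynomial.hasseDeriv (n-1) f).eval lam = 0 := by
    rw [hTay]
    have hterm : ∀ j ∈ Finset.range (d+1),
        bb j * (s*u)^j = c (n-1) * u^d * (e j * ((y:K))^(d-j)) := by
      intro j hj
      have hjd : j ≤ d := by simpa [Nat.lt_succ_iff] using hj
      have h1 : c (n-1) * e j = bb j * s ^ j := by
        rw [he]; field_simp
      have h2 : u ^ d * ((y:K))^(d-j) = u ^ j := by
        have h3 : u ^ d = u ^ j * u ^ (d - j) := by
          rw [← pow_add]; congr 1; omega
        rw [h3, mul_assoc, ← mul_pow, hu, inv_mul_cancel₀ hy0, one_pow, mul_one]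
      calc bb j * (s*u)^j = (bb j * s^j) * u^j := by rw [mul_pow]; ring
      _ = (c (n-1) * e j) * (u^d * ((y:K))^(d-j)) := by rw [h1, h2]
      _ = c (n-1) * u^d * (e j * ((y:K))^(d-j)) := by ring
    rw [Finset.sum_congr rfl hterm, ← Finset.mul_sum, hsum0, mul_zero]
  have hA := gammaA hq' hν' hδ hdropΓ
  have hvlb : v (lam - β) = (((p - q - ν) + τ : Γ) : WithTop Γ) := by
    have h1 : lam - β = s * u := by rw [hlam]; ring
    rw [h1, hvmul, vs', hvu, add_zero]
  refine ⟨lam, n-1, by omega, ?_, ?_⟩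
  · have hD : (derivative^[n-1] f) = (n-1).factorial • (Polynomial.hasseDeriv (n-1) f) := by
      rw [← Polynomial.factorial_smul_hasseDeriv]
      rfl
    rw [hD, nsmul_eq_mul, Polynomial.eval_mul, Polynomial.eval_natCast, hlamroot, mul_zero]
  · refine Or.inr ⟨?_, ht0, ?_⟩
    · have h1 : lam - α = t + (lam - β) := by rw [htdef]; ring
      have h2 : v (lam - α) = v t := by
        rw [h1]
        refine v_add_left hv0 hvmul hvadd ?_
        rw [← hτ, hvlb]
        exact_mod_cast (show τ < (p - q - ν) + τ from
          lt_add_of_pos_left τ (lt_of_le_of_lt (add_nonneg hν' hδ) hA))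
      intro h
      rw [h, (hv0 0).2 rfl] at h2
      exact hτtop h2.symm
    · have h3 : (lam - α) - (β - α) = lam - β := by ring
      rw [h3, hvlb, ← hτ, ← WithTop.coe_add, WithTop.coe_lt_coe]
      have h4 : δ < p - q - ν := lt_of_le_of_lt (le_add_of_nonneg_left hν') hA
      calc τ + δ = δ + τ := by abel
      _ < (p - q - ν) + τ := add_lt_add_left h4 τ
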